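/- If \sup_s \|(P^{\pi})^t(\cdot|s) - \nu^{\pi}\|_1 \le C_p \varrho^t for all t \ge 1 with 0 \le \varrho < 1, then I - P^{\pi} + P^{\pi,\infty} is invertible, (I - P^{\pi} + P^{\pi,\infty})^{-1} = I + \sum_{t=1}^{\infty}((P^{\pi})^t - P^{\pi,\infty}), and \|(I - P^{\pi} + P^{\pi,\infty})^{-1}\|_{\infty} \le 1 + C_p \varrho/(1 - \varrho). -/

import Mathlib

open scoped NNReal

attribute [local instance] Matrix.linftyOpNormedAddCommGroup Matrix.linftyOpNormedRing
  Matrix.linftyOpNormedSpace Matrix.linftyOpIsBoundedSMul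

section helpers

variable {S : Type*} [Fintype S] [DecidableEq S] [Nonempty S]

lemma norm_le_of_rowsum (M : Matrix S S ℝ) (c : ℝ) (h : ∀ i, ∑ j, |M i j| ≤ c) :
    ‖M‖ ≤ c := by
  have hc : 0 ≤ c := le_trans (Finset.sum_nonneg fun j _ => abs_nonneg _)
    (h (Classical.arbitrary S))
  rw [Matrix.linfty_opNorm_def, show c = ((c.toNNReal : ℝ≥0) : ℝ) by simp [hc],
    NNReal.coe_le_coe]
  refine Finset.sup_le fun i _ => ?_
  rw [← NNReal.coe_le_coe]
  push_cast
  simpa [Real.norm_eq_abs, hc] using h i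

set_option linter.unusedSectionVars false in
lemma rowsum_le_norm (M : Matrix S S ℝ) (i : S) : ∑ j, |M i j| ≤ ‖M‖ := by
  rw [Matrix.linfty_opNorm_def]
  have : (∑ j, ‖M i j‖₊ : ℝ≥0) ≤ Finset.univ.sup fun i => ∑ j, ‖M i j‖₊ :=
    Finset.le_sup (f := fun i => ∑ j, ‖M i j‖₊) (Finset.mem_univ i)
  calc ∑ j, |M i j| = ((∑ j, ‖M i j‖₊ : ℝ≥0) : ℝ) := by push_cast; simp [Real.norm_eq_abs]
    _ ≤ _ := NNReal.coe_le_coe.mpr this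

end helpers

/-- The operator norm of a square matrix induced by the supremum norm on vectors,
i.e. the maximal absolute row sum. -/
noncomputable def rowSumNorm {S : Type*} [Fintype S] (M : Matrix S S ℝ) : ℝ :=
  ⨆ i, ∑ j, |M i j|

/-- If `sup_s ‖(P^π)^t(·|s) - ν^π‖₁ ≤ C_p ϱ^t` for all `t ≥ 1` with `0 ≤ ϱ < 1`, then
`I - P^π + P^{π,∞}` is invertible, its inverse is `I + ∑_{t≥1} ((P^π)^t - P^{π,∞})`
(entrywise convergent series), and `‖(I - P^π + P^{π,∞})⁻¹‖_∞ ≤ 1 + C_p ϱ/(1-ϱ)`. -/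
theorem resolvent_inverse_bound
    {S : Type*} [Fintype S] [DecidableEq S] [Nonempty S]
    (P : Matrix S S ℝ) (ν : S → ℝ) (Cp ϱ : ℝ)
    (hPnn : ∀ s s', 0 ≤ P s s') (hProw : ∀ s, ∑ s', P s s' = 1)
    (hνnn : ∀ s, 0 ≤ ν s) (hνsum : ∑ s, ν s = 1)
    (hstat : ∀ s', ∑ s, ν s * P s s' = ν s')
    (Pinf : Matrix S S ℝ) (hPinf : ∀ s s', Pinf s s' = ν s')
    (hCp : 0 ≤ Cp) (hϱ0 : 0 ≤ ϱ) (hϱ1 : ϱ < 1)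
    (hmix : ∀ t : ℕ, 1 ≤ t → ∀ s, ∑ s', |(P ^ t) s s' - ν s'| ≤ Cp * ϱ ^ t) :
    IsUnit (1 - P + Pinf) ∧
    (∀ s s', HasSum (fun t : ℕ => (P ^ (t + 1)) s s' - Pinf s s')
      (((1 - P + Pinf)⁻¹ - 1) s s')) ∧
    rowSumNorm ((1 - P + Pinf)⁻¹) ≤ 1 + Cp * ϱ / (1 - ϱ) := by
  set A : Matrix S S ℝ := P - Pinf with hA
  have hM : 1 - P + Pinf = 1 - A := by rw [hA]; abel
  -- algebra facts
  have hPQ : P * Pinf = Pinf := by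
    ext s s'
    simp only [Matrix.mul_apply, hPinf]
    rw [← Finset.sum_mul, hProw, one_mul]
  have hQP : Pinf * P = Pinf := by
    ext s s'
    simp only [Matrix.mul_apply, hPinf]
    exact hstat s'
  have hQQ : Pinf * Pinf = Pinf := by
    ext s s'
    simp only [Matrix.mul_apply, hPinf]
    rw [← Finset.sum_mul, hνsum, one_mul]
  have hPtQ : ∀ t : ℕ, P ^ t * Pinf = Pinf := by
    intro t
    induction t with
    | zero => simp
    | succ t ih => rw [pow_succ, mul_assoc, hPQ, ih]
  have hpow : ∀ t : ℕ, A ^ (t + 1) = P ^ (t + 1) - Pinf := by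
    intro t
    induction t with
    | zero => simp [hA]
    | succ t ih =>
      rw [pow_succ, ih, hA, sub_mul, mul_sub, mul_sub, ← pow_succ, hPtQ, hQP, hQQ]
      abel
  -- norm bound on powers
  have hnorm : ∀ t : ℕ, ‖A ^ (t + 1)‖ ≤ Cp * ϱ ^ (t + 1) := by
    intro t
    refine norm_le_of_rowsum _ _ fun i => ?_
    have := hmix (t + 1) (Nat.le_add_left 1 t) i
    simpa [hpow t, hPinf] using this
  -- summability
  have hgeom : HasSum (fun t : ℕ => Cp * ϱ ^ (t + 1)) (Cp * ϱ / (1 - ϱ)) := by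
    have h0 : HasSum (fun t : ℕ => ϱ ^ t) (1 - ϱ)⁻¹ :=
      hasSum_geometric_of_lt_one hϱ0 hϱ1
    have h1 := h0.mul_left (Cp * ϱ)
    have : (fun t : ℕ => Cp * ϱ * ϱ ^ t) = fun t : ℕ => Cp * ϱ ^ (t + 1) := by
      funext t; ring
    rw [this] at h1
    simpa [div_eq_mul_inv] using h1
  have hsummable : Summable fun t : ℕ => A ^ (t + 1) :=
    Summable.of_norm_bounded hgeom.summable hnorm
  obtain ⟨T, hT⟩ := hsummable
  set B : Matrix S S ℝ := 1 + T with hB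
  have hTB : HasSum (fun t : ℕ => A ^ t) B := by
    have := (hasSum_nat_add_iff (f := fun t : ℕ => A ^ t) 1).mp hT
    simpa [hB, add_comm] using this
  -- B is a two-sided inverse of 1 - A
  have htel : HasSum (fun t : ℕ => A ^ t - A ^ (t + 1)) 1 := by
    have := hTB.sub hT
    simpa [hB] using this
  have hright : (1 - A) * B = 1 := by
    have h1 : HasSum (fun t : ℕ => (1 - A) * A ^ t) ((1 - A) * B) := hTB.mul_left _
    have h2 : (fun t : ℕ => (1 - A) * A ^ t) = fun t : ℕ => A ^ t - A ^ (t + 1) := by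
      funext t; rw [sub_mul, one_mul, ← pow_succ']
    rw [h2] at h1
    exact h1.unique htel
  have hleft : B * (1 - A) = 1 := by
    have h1 : HasSum (fun t : ℕ => A ^ t * (1 - A)) (B * (1 - A)) := hTB.mul_right _
    have h2 : (fun t : ℕ => A ^ t * (1 - A)) = fun t : ℕ => A ^ t - A ^ (t + 1) := by
      funext t; rw [mul_sub, mul_one, ← pow_succ]
    rw [h2] at h1
    exact h1.unique htel
  have hunit : IsUnit (1 - P + Pinf) := by
    rw [hM]; exact ⟨⟨1 - A, B, hright, hleft⟩, rfl⟩
  have hinv : (1 - P + Pinf)⁻¹ = B := by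
    rw [hM]; exact Matrix.inv_eq_right_inv hright
  refine ⟨hunit, ?_, ?_⟩
  · intro s s'
    let L : Matrix S S ℝ →ₗ[ℝ] ℝ :=
      { toFun := fun M => M s s', map_add' := fun _ _ => rfl,
        map_smul' := fun _ _ => rfl }
    have hLc : Continuous ⇑L := L.continuous_of_finiteDimensional
    have := hT.map L.toAddMonoidHom hLc
    have heq : ((1 - P + Pinf)⁻¹ - 1) s s' = T s s' := by
      rw [hinv, hB]; simp
    rw [heq]
    convert this using 2 with t
    simp [hpow t, Function.comp, L]
    all_goals rfl
  · have hBnorm : ‖B‖ ≤ 1 + Cp * ϱ / (1 - ϱ) := by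
      have h1 : ‖T‖ ≤ Cp * ϱ / (1 - ϱ) := by
        have := tsum_of_norm_bounded hgeom hnorm
        exact hT.norm_le_of_bounded hgeom hnorm
      calc ‖B‖ ≤ ‖(1 : Matrix S S ℝ)‖ + ‖T‖ := norm_add_le _ _
        _ ≤ 1 + Cp * ϱ / (1 - ϱ) := by rw [norm_one]; linarith
    rw [hinv]
    exact ciSup_le fun i => le_trans (rowsum_le_norm B i) hBnorm
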